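/- Let k ≥ 3 and 0 < γ < 1/4^{k−1}. There exists R₀ (depending only on k and γ) such that for every R ≥ R₀ and N = ⌈20(2k)^{k/2}⌉·R the following holds. Let φ : {−1,1}^R → ℝ be given by φ(1^R) = 1/2, φ((−1)^R) = −1/2, and φ(z) = 0 otherwise, and let ψ : {−1,1}^N → ℝ satisfy: ‖ψ‖₁ = 1; Σ_x ψ(x) = 0; Σ_{x ∈ D₊} |ψ(x)| ≤ 1/(48N) where D₊ = {x : ψ(x) > 0 and |x| ≥ k}; and Σ_{x ∈ D₋} |ψ(x)| ≤ 1/2 − 2/4^k where D₋ = {x : ψ(x) < 0 and |x| < k}. Then Σ_{x ∈ D} (φ★ψ)(x) · f(x) − Σ_{x ∈ {−1,1}^{NR} ∖ D} |(φ★ψ)(x)| ≥ 9/10, where f = GapOR_R^γ ∘ THR_N^k with domain D. -/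

import Mathlib

open Finset
open scoped Classical

/-- Hamming weight: the number of coordinates equal to −1 (encoded by `true`). -/
def wt {n : ℕ} (x : Fin n → Bool) : ℕ := (Finset.univ.filter (fun i => x i = true)).card

/-- `THR_N^k(x) = −1` (i.e. `true`) iff `|x| ≥ k`. -/
def THR (N k : ℕ) (x : Fin N → Bool) : Bool := decide (k ≤ wt x)

/-- The dual polynomial `φ` for GapOR: `φ(1^R) = 1/2`, `φ((−1)^R) = −1/2`, `φ(z) = 0` else. -/
noncomputable def phi0 (R : ℕ) : (Fin R → Bool) → ℝ := fun z =>
  if z = fun _ => false then 1 / 2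
  else if z = fun _ => true then -(1 / 2)
  else 0

/-- The dual block composition `(φ★ψ)(x) = 2^R · φ(sgn(ψ(x₁)),…,sgn(ψ(x_R))) · ∏ᵢ |ψ(xᵢ)|`. -/
noncomputable def dbc {N R : ℕ} (φ : (Fin R → Bool) → ℝ) (ψ : (Fin N → Bool) → ℝ)
    (x : Fin R → Fin N → Bool) : ℝ :=
  2 ^ R * φ (fun i => decide (ψ (x i) < 0)) * ∏ i, |ψ (x i)|

/-- The domain of `f = GapOR_R^γ ∘ THR_N^k`. -/
def inDom (γ : ℝ) (N R k : ℕ) (x : Fin R → Fin N → Bool) : Prop :=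
  (∀ i, THR N k (x i) = false) ∨
    γ * R ≤ ((Finset.univ.filter (fun i => THR N k (x i) = true)).card : ℝ)

/-- The value of `f = GapOR_R^γ ∘ THR_N^k` on its domain: `1` on the all-`+1` case,
`−1` otherwise. -/
noncomputable def fval (N R k : ℕ) (x : Fin R → Fin N → Bool) : ℝ :=
  if ∀ i, THR N k (x i) = false then 1 else -1

/-! ### Auxiliary definitions -/

noncomputable def gP {N : ℕ} (ψ : (Fin N → Bool) → ℝ) (y : Fin N → Bool) : ℝ :=
  if 0 ≤ ψ y then |ψ y| else 0
noncomputable def gN {N : ℕ} (ψ : (Fin N → Bool) → ℝ) (y : Fin N → Bool) : ℝ :=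
  if ψ y < 0 then |ψ y| else 0
noncomputable def gB (k : ℕ) {N : ℕ} (ψ : (Fin N → Bool) → ℝ) (y : Fin N → Bool) : ℝ :=
  if 0 < ψ y ∧ k ≤ wt y then |ψ y| else 0
noncomputable def aN (k : ℕ) {N : ℕ} (ψ : (Fin N → Bool) → ℝ) (y : Fin N → Bool) : ℝ :=
  if ψ y < 0 ∧ wt y < k then |ψ y| else 0
noncomputable def bN (k : ℕ) {N : ℕ} (ψ : (Fin N → Bool) → ℝ) (y : Fin N → Bool) : ℝ :=
  if ψ y < 0 ∧ k ≤ wt y then |ψ y| else 0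
noncomputable def wN (k : ℕ) (t : ℝ) {N : ℕ} (ψ : (Fin N → Bool) → ℝ) (y : Fin N → Bool) : ℝ :=
  aN k ψ y + t * bN k ψ y

noncomputable def EpF (k : ℕ) {N R : ℕ} (ψ : (Fin N → Bool) → ℝ)
    (x : Fin R → Fin N → Bool) : ℝ :=
  ∑ i, ∏ j, (if j = i then gB k ψ (x j) else gP ψ (x j))
noncomputable def EnF (k : ℕ) (t : ℝ) {N R : ℕ} (ψ : (Fin N → Bool) → ℝ)
    (x : Fin R → Fin N → Bool) : ℝ :=
  ∏ i, wN k t ψ (x i)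
noncomputable def FF (γ : ℝ) (N R k : ℕ) (ψ : (Fin N → Bool) → ℝ)
    (x : Fin R → Fin N → Bool) : ℝ :=
  (if inDom γ N R k x then dbc (phi0 R) ψ x * fval N R k x else 0) -
    if ¬ inDom γ N R k x then |dbc (phi0 R) ψ x| else 0

section lems
variable {N : ℕ} (ψ : (Fin N → Bool) → ℝ) (k : ℕ) (t : ℝ)

lemma gP_nonneg (y : Fin N → Bool) : 0 ≤ gP ψ y := by unfold gP; split <;> simp [abs_nonneg]
lemma gN_nonneg (y : Fin N → Bool) : 0 ≤ gN ψ y := by unfold gN; split <;> simp [abs_nonneg]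
lemma gB_nonneg (y : Fin N → Bool) : 0 ≤ gB k ψ y := by unfold gB; split <;> simp [abs_nonneg]
lemma aN_nonneg (y : Fin N → Bool) : 0 ≤ aN k ψ y := by unfold aN; split <;> simp [abs_nonneg]
lemma bN_nonneg (y : Fin N → Bool) : 0 ≤ bN k ψ y := by unfold bN; split <;> simp [abs_nonneg]
lemma wN_nonneg (ht : 0 ≤ t) (y : Fin N → Bool) : 0 ≤ wN k t ψ y :=
  add_nonneg (aN_nonneg ψ k y) (mul_nonneg ht (bN_nonneg ψ k y))

lemma gP_add_gN (y : Fin N → Bool) : gP ψ y + gN ψ y = |ψ y| := by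
  unfold gP gN
  by_cases h : 0 ≤ ψ y
  · rw [if_pos h, if_neg (not_lt.mpr h), add_zero]
  · rw [if_neg h, if_pos (not_le.mp h), zero_add]

lemma gP_sub_gN (y : Fin N → Bool) : gP ψ y - gN ψ y = ψ y := by
  unfold gP gN
  by_cases h : 0 ≤ ψ y
  · rw [if_pos h, if_neg (not_lt.mpr h), sub_zero, abs_of_nonneg h]
  · rw [if_neg h, if_pos (not_le.mp h), zero_sub, abs_of_neg (not_le.mp h), neg_neg]

lemma aN_add_bN (y : Fin N → Bool) : aN k ψ y + bN k ψ y = gN ψ y := by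
  unfold aN bN gN
  by_cases h : ψ y < 0
  · by_cases h2 : k ≤ wt y
    · rw [if_neg (fun hc => absurd hc.2 (by omega)), if_pos ⟨h, h2⟩, if_pos h, zero_add]
    · rw [if_pos ⟨h, by omega⟩, if_neg (fun hc => h2 hc.2), if_pos h, add_zero]
  · rw [if_neg (fun hc => h hc.1), if_neg (fun hc => h hc.1), if_neg h, add_zero]

end lems

section dbclems
variable {N R : ℕ} (ψ : (Fin N → Bool) → ℝ) {x : Fin R → Fin N → Bool}

lemma prodP_nonneg (x : Fin R → Fin N → Bool) : 0 ≤ ∏ i, gP ψ (x i) :=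
  Finset.prod_nonneg fun i _ => gP_nonneg ψ _
lemma prodN_nonneg (x : Fin R → Fin N → Bool) : 0 ≤ ∏ i, gN ψ (x i) :=
  Finset.prod_nonneg fun i _ => gN_nonneg ψ _

lemma prod_abs_eq_gP (hP : ∀ i, 0 ≤ ψ (x i)) : ∏ i, |ψ (x i)| = ∏ i, gP ψ (x i) :=
  Finset.prod_congr rfl fun i _ => by rw [gP, if_pos (hP i)]

lemma prod_abs_eq_gN (hQ : ∀ i, ψ (x i) < 0) : ∏ i, |ψ (x i)| = ∏ i, gN ψ (x i) :=
  Finset.prod_congr rfl fun i _ => by rw [gN, if_pos (hQ i)]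

lemma prod_gP_zero' (i : Fin R) (h : ψ (x i) < 0) : ∏ j, gP ψ (x j) = 0 :=
  Finset.prod_eq_zero (Finset.mem_univ i) (by rw [gP, if_neg (not_le.mpr h)])

lemma prod_gN_zero' (i : Fin R) (h : 0 ≤ ψ (x i)) : ∏ j, gN ψ (x j) = 0 :=
  Finset.prod_eq_zero (Finset.mem_univ i) (by rw [gN, if_neg (not_lt.mpr h)])

lemma sign_false (hP : ∀ i, 0 ≤ ψ (x i)) :
    (fun i => decide (ψ (x i) < 0)) = (fun _ : Fin R => false) :=
  funext fun i => decide_eq_false (not_lt.mpr (hP i))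

lemma sign_true (hQ : ∀ i, ψ (x i) < 0) :
    (fun i => decide (ψ (x i) < 0)) = (fun _ : Fin R => true) :=
  funext fun i => by rw [decide_eq_true_eq]; exact hQ i

lemma dbc_pos_case (hP : ∀ i, 0 ≤ ψ (x i)) :
    dbc (phi0 R) ψ x = 2 ^ R * (∏ i, gP ψ (x i)) / 2 := by
  rw [dbc, sign_false ψ hP, prod_abs_eq_gP ψ hP, phi0, if_pos rfl]; ring

lemma dbc_neg_case (hR : 0 < R) (hQ : ∀ i, ψ (x i) < 0) :
    dbc (phi0 R) ψ x = -(2 ^ R * (∏ i, gN ψ (x i)) / 2) := by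
  rw [dbc, sign_true ψ hQ, prod_abs_eq_gN ψ hQ, phi0, if_neg, if_pos rfl]
  · ring
  · intro h; have := congrFun h ⟨0, hR⟩; simp at this

lemma dbc_mixed (hP : ¬ ∀ i, 0 ≤ ψ (x i)) (hQ : ¬ ∀ i, ψ (x i) < 0) :
    dbc (phi0 R) ψ x = 0 := by
  push_neg at hP hQ
  obtain ⟨i1, hi1⟩ := hP
  obtain ⟨i2, hi2⟩ := hQ
  rw [dbc, phi0, if_neg, if_neg]
  · ring
  · intro h
    have := congrFun h i2
    rw [decide_eq_true_eq] at this
    exact absurd this (not_lt.mpr hi2)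
  · intro h
    have := congrFun h i1
    rw [decide_eq_false_iff_not, not_lt] at this
    exact absurd this (not_le.mpr hi1)

lemma dbc_abs (hR : 0 < R) (x : Fin R → Fin N → Bool) :
    |dbc (phi0 R) ψ x| = 2 ^ R * ((∏ i, gP ψ (x i)) + ∏ i, gN ψ (x i)) / 2 := by
  by_cases hP : ∀ i, 0 ≤ ψ (x i)
  · rw [dbc_pos_case ψ hP, prod_gN_zero' ψ ⟨0, hR⟩ (hP _), add_zero,
      abs_of_nonneg (by have := prodP_nonneg ψ x; positivity)]
  by_cases hQ : ∀ i, ψ (x i) < 0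
  · rw [dbc_neg_case ψ hR hQ, prod_gP_zero' ψ ⟨0, hR⟩ (hQ _), zero_add, abs_neg,
      abs_of_nonneg (by have := prodN_nonneg ψ x; positivity)]
  · push_neg at hP
    obtain ⟨i1, hi1⟩ := hP
    rw [dbc_mixed ψ (by push_neg; exact ⟨i1, hi1⟩) hQ, abs_zero,
      prod_gP_zero' ψ i1 hi1]
    push_neg at hQ
    obtain ⟨i2, hi2⟩ := hQ
    rw [prod_gN_zero' ψ i2 hi2]
    ring

lemma THR_false_iff (k : ℕ) (y : Fin N → Bool) : THR N k y = false ↔ wt y < k := by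
  simp [THR]

end dbclems

set_option maxHeartbeats 2000000 in
theorem stmt11 (k : ℕ) (hk : 3 ≤ k) (γ : ℝ) (hγ0 : 0 < γ) (hγ : γ < 1 / 4 ^ (k - 1)) :
    ∃ R₀ : ℕ, ∀ R : ℕ, R₀ ≤ R →
      ∀ N : ℕ, N = ⌈(20 : ℝ) * (2 * (k : ℝ)) ^ ((k : ℝ) / 2)⌉₊ * R →
      ∀ ψ : (Fin N → Bool) → ℝ,
        (∑ x : Fin N → Bool, |ψ x| = 1) →
        (∑ x : Fin N → Bool, ψ x = 0) →
        (∑ x ∈ Finset.univ.filter (fun x : Fin N → Bool => 0 < ψ x ∧ k ≤ wt x), |ψ x|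
          ≤ 1 / (48 * N)) →
        (∑ x ∈ Finset.univ.filter (fun x : Fin N → Bool => ψ x < 0 ∧ wt x < k), |ψ x|
          ≤ 1 / 2 - 2 / 4 ^ k) →
        9 / 10 ≤
          (∑ x ∈ Finset.univ.filter (fun x : Fin R → Fin N → Bool => inDom γ N R k x),
              dbc (phi0 R) ψ x * fval N R k x)
          - ∑ x ∈ Finset.univ.filter (fun x : Fin R → Fin N → Bool => ¬ inDom γ N R k x),
              |dbc (phi0 R) ψ x| := by
  set c : ℝ := 4 / 4 ^ k with hc_def
  have h4k : (64:ℝ) ≤ 4 ^ k := by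
    calc (64:ℝ) = 4 ^ 3 := by norm_num
    _ ≤ 4 ^ k := pow_le_pow_right₀ (by norm_num) hk
  have hc0 : 0 < c := by positivity
  have hc1 : c ≤ 1 / 16 := by
    rw [hc_def, div_le_div_iff₀ (by positivity) (by norm_num)]
    linarith
  have hγc : γ < c := by
    have h4 : (4:ℝ) ^ k = 4 ^ (k - 1) * 4 := by
      rw [← pow_succ]; congr 1; omega
    have : (1:ℝ) / 4 ^ (k - 1) = c := by
      rw [hc_def, div_eq_div_iff (by positivity) (by positivity), h4]; ring
    linarith
  have hγ1 : γ < 1 := lt_of_lt_of_le (hγc.trans_le hc1) (by norm_num)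
  have h1c : 0 < 1 - c := by linarith [hc1]
  have h1γ : 0 < 1 - γ := by linarith
  set t : ℝ := γ * (1 - c) / (c * (1 - γ)) with ht_def
  have ht0 : 0 < t := by positivity
  have ht1 : t < 1 := by
    rw [ht_def, div_lt_one (by positivity)]
    have hx : γ * (1 - c) < c * (1 - γ) ↔ γ - γ*c < c - c*γ := by constructor <;> intro <;> nlinarith
    rw [hx]
    linarith
  set u : ℝ := t ^ γ with hu_def
  have hu0 : 0 < u := Real.rpow_pos_of_pos ht0 γ
  set θ : ℝ := (1 - c + t * c) / u with hθ_def
  have hbase_eq : 1 - c + t * c = (1 - c) / (1 - γ) := by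
    rw [ht_def]; field_simp; ring
  have hbase0 : 0 < 1 - c + t * c := by rw [hbase_eq]; positivity
  have hθ0 : 0 < θ := by positivity
  have hθ1 : θ < 1 := by
    rw [hθ_def, div_lt_one hu0, hbase_eq, hu_def]
    have hL0 : 0 < (1 - c) / (1 - γ) := by positivity
    have e1 : (1 - γ) * (Real.log (1 - c) - Real.log (1 - γ)) < γ - c := by
      have hne : (1 - c) / (1 - γ) ≠ 1 := by
        intro hh
        rw [div_eq_one_iff_eq (by linarith)] at hh
        exact absurd hγc (by rw [show γ = c by linarith]; simp)
      have := Real.log_lt_sub_one_of_pos hL0 hne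
      rw [Real.log_div (by linarith) (by linarith)] at this
      have h2 : (1 - c) / (1 - γ) - 1 = (γ - c) / (1 - γ) := by field_simp; ring
      rw [h2, lt_div_iff₀ h1γ] at this
      linarith [this]
    have e2 : γ * (Real.log c - Real.log γ) < c - γ := by
      have hne : c / γ ≠ 1 := by
        intro hh
        rw [div_eq_one_iff_eq (by linarith)] at hh
        exact absurd hγc (by rw [hh]; simp)
      have := Real.log_lt_sub_one_of_pos (by positivity : (0:ℝ) < c / γ) hne
      rw [Real.log_div (by linarith) (by linarith)] at this
      have h2 : c / γ - 1 = (c - γ) / γ := by field_simp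
      rw [h2, lt_div_iff₀ hγ0] at this
      linarith [this]
    have key : Real.log ((1 - c) / (1 - γ)) < Real.log (t ^ γ) := by
      rw [Real.log_rpow ht0, Real.log_div (by linarith) (by linarith), ht_def,
        Real.log_div (by positivity) (by positivity),
        Real.log_mul (by positivity) (by positivity),
        Real.log_mul (by positivity) (by positivity)]
      linarith [e1, e2]
    calc (1 - c) / (1 - γ) = Real.exp (Real.log ((1 - c) / (1 - γ))) := (Real.exp_log hL0).symm
      _ < Real.exp (Real.log (t ^ γ)) := Real.exp_lt_exp.mpr key
      _ = t ^ γ := Real.exp_log (Real.rpow_pos_of_pos ht0 γ)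
  obtain ⟨n, hn⟩ := exists_pow_lt_of_lt_one (show (0:ℝ) < 1/20 by norm_num) hθ1
  refine ⟨max n 1, fun R hR N hN ψ hpsi1 hpsi0 hpos hneg => ?_⟩
  have hR1 : 1 ≤ R := le_trans (le_max_right n 1) hR
  have hR0 : 0 < R := hR1
  have hθR : θ ^ R ≤ 1 / 20 :=
    le_trans (pow_le_pow_of_le_one hθ0.le hθ1.le (le_trans (le_max_left n 1) hR)) hn.le
  have hCpos : 0 < ⌈(20:ℝ) * (2 * (k:ℝ)) ^ ((k:ℝ)/2)⌉₊ := by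
    apply Nat.ceil_pos.mpr
    have hk0 : (0:ℝ) < (k:ℝ) := by exact_mod_cast (by omega : 0 < k)
    positivity
  have hRN : R ≤ N := by
    rw [hN]
    calc R = 1 * R := (one_mul R).symm
    _ ≤ _ := Nat.mul_le_mul_right R hCpos
  have hN0 : 0 < N := lt_of_lt_of_le hR0 hRN
  have hNR : (R:ℝ) ≤ (N:ℝ) := by exact_mod_cast hRN
  have hN0' : (0:ℝ) < N := by exact_mod_cast hN0
  -- sums of ψ pieces
  have hA : ∑ y, gP ψ y + ∑ y, gN ψ y = 1 := by
    rw [← Finset.sum_add_distrib]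
    simp_rw [gP_add_gN]
    exact hpsi1
  have hB : ∑ y, gP ψ y - ∑ y, gN ψ y = 0 := by
    rw [← Finset.sum_sub_distrib]
    simp_rw [gP_sub_gN]
    exact hpsi0
  have hSgP : ∑ y, gP ψ y = 1/2 := by linarith
  have hSgN : ∑ y, gN ψ y = 1/2 := by linarith
  have hSgB : ∑ y, gB k ψ y ≤ 1/(48*N) := by
    rw [Finset.sum_filter] at hpos
    calc ∑ y, gB k ψ y = ∑ y, if 0 < ψ y ∧ k ≤ wt y then |ψ y| else 0 := by simp only [gB]
    _ ≤ 1/(48*N) := hpos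
  have hSgB0 : 0 ≤ ∑ y, gB k ψ y := Finset.sum_nonneg fun y _ => gB_nonneg ψ k y
  have hc2 : (1:ℝ)/2 - 2/4^k = 1/2 - c/2 := by rw [hc_def]; ring
  have hSaN : ∑ y, aN k ψ y ≤ 1/2 - c/2 := by
    rw [Finset.sum_filter] at hneg
    calc ∑ y, aN k ψ y = ∑ y, if ψ y < 0 ∧ wt y < k then |ψ y| else 0 := by simp only [aN]
    _ ≤ 1/2 - 2/4^k := hneg
    _ = 1/2 - c/2 := hc2
  have hSaN0 : 0 ≤ ∑ y, aN k ψ y := Finset.sum_nonneg fun y _ => aN_nonneg ψ k y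
  have hSbN : ∑ y, bN k ψ y = 1/2 - ∑ y, aN k ψ y := by
    have hab : ∑ y, aN k ψ y + ∑ y, bN k ψ y = ∑ y, gN ψ y := by
      rw [← Finset.sum_add_distrib]
      simp_rw [aN_add_bN]
    linarith
  have hSw : ∑ y, wN k t ψ y = ∑ y, aN k ψ y + t * ∑ y, bN k ψ y := by
    simp only [wN]
    rw [Finset.sum_add_distrib, Finset.mul_sum]
  have hSw0 : 0 ≤ ∑ y, wN k t ψ y :=
    Finset.sum_nonneg fun y _ => wN_nonneg ψ k t ht0.le y
  have h2Sw : 2 * ∑ y, wN k t ψ y ≤ 1 - c + t * c := by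
    rw [hSw, hSbN]
    have hx := mul_nonneg (by linarith : (0:ℝ) ≤ 1 - t)
      (by linarith : (0:ℝ) ≤ 1 - c - 2 * ∑ y, aN k ψ y)
    have hx2 : (1-t) * (1 - c - 2 * ∑ y, aN k ψ y)
        = 1 - c - 2 * ∑ y, aN k ψ y - t + t*c + 2*(t * ∑ y, aN k ψ y) := by ring
    have hx3 : 2 * (∑ y, aN k ψ y + t * (1/2 - ∑ y, aN k ψ y))
        = 2 * ∑ y, aN k ψ y + t - 2*(t * ∑ y, aN k ψ y) := by ring
    rw [hx2] at hx
    rw [hx3]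
    linarith
  -- goal reduction
  have hgoal : (∑ x ∈ Finset.univ.filter (fun x : Fin R → Fin N → Bool => inDom γ N R k x),
        dbc (phi0 R) ψ x * fval N R k x)
      - ∑ x ∈ Finset.univ.filter (fun x : Fin R → Fin N → Bool => ¬ inDom γ N R k x),
        |dbc (phi0 R) ψ x|
      = ∑ x : Fin R → Fin N → Bool, FF γ N R k ψ x := by
    rw [Finset.sum_filter, Finset.sum_filter, ← Finset.sum_sub_distrib]
    rfl
  rw [hgoal]
  -- pointwise facts
  have hfval_abs : ∀ x : Fin R → Fin N → Bool, |fval N R k x| = 1 := by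
    intro x
    rw [fval]
    split <;> simp
  have hFlb : ∀ x : Fin R → Fin N → Bool, -|dbc (phi0 R) ψ x| ≤ FF γ N R k ψ x := by
    intro x
    rw [FF]
    by_cases hD : inDom γ N R k x
    · rw [if_pos hD, if_neg (not_not.mpr hD), sub_zero]
      calc -|dbc (phi0 R) ψ x| = -|dbc (phi0 R) ψ x * fval N R k x| := by
            rw [abs_mul, hfval_abs, mul_one]
      _ ≤ _ := neg_abs_le _
    · rw [if_neg hD, if_pos hD, zero_sub]
  have hEp0 : ∀ x : Fin R → Fin N → Bool, 0 ≤ EpF k ψ x := by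
    intro x
    refine Finset.sum_nonneg fun i _ => Finset.prod_nonneg fun j _ => ?_
    split
    exacts [gB_nonneg ψ k _, gP_nonneg ψ _]
  have hEn0 : ∀ x : Fin R → Fin N → Bool, 0 ≤ EnF k t ψ x := fun x =>
    Finset.prod_nonneg fun i _ => wN_nonneg ψ k t ht0.le _
  -- the key pointwise inequality
  have hkey : ∀ x : Fin R → Fin N → Bool,
      |dbc (phi0 R) ψ x| - 2^R * (EpF k ψ x + u⁻¹^R * EnF k t ψ x) ≤ FF γ N R k ψ x := by
    intro x
    have h2R : (0:ℝ) < 2^R := by positivity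
    have hterm0 : 0 ≤ 2^R * (EpF k ψ x + u⁻¹^R * EnF k t ψ x) := by
      have h1 := hEp0 x; have h2 := hEn0 x
      positivity
    by_cases hP : ∀ i, 0 ≤ ψ (x i)
    · by_cases hG : ∀ i, wt (x i) < k
      · -- good positive block
        have hthr : ∀ i, THR N k (x i) = false := fun i => (THR_false_iff k _).mpr (hG i)
        have hdom : inDom γ N R k x := Or.inl hthr
        have hf : fval N R k x = 1 := if_pos hthr
        have hd : dbc (phi0 R) ψ x = 2^R * (∏ i, gP ψ (x i)) / 2 := dbc_pos_case ψ hP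
        have hd0 : 0 ≤ dbc (phi0 R) ψ x := by
          rw [hd]; have := prodP_nonneg ψ x; positivity
        have hFeq : FF γ N R k ψ x = |dbc (phi0 R) ψ x| := by
          rw [FF, if_pos hdom, if_neg (not_not.mpr hdom), sub_zero, hf, mul_one,
            abs_of_nonneg hd0]
        linarith
      · -- bad positive block
        push_neg at hG
        obtain ⟨i0, hi0⟩ := hG
        have hprod : ∏ j, gP ψ (x j) ≤ EpF k ψ x := by
          rw [EpF]
          refine le_trans ?_ (Finset.single_le_sum
            (f := fun i => ∏ j, (if j = i then gB k ψ (x j) else gP ψ (x j)))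
            (fun i _ => Finset.prod_nonneg fun j _ => by
              split
              exacts [gB_nonneg ψ k _, gP_nonneg ψ _]) (Finset.mem_univ i0))
          refine Finset.prod_le_prod (fun j _ => gP_nonneg ψ _) (fun j _ => ?_)
          by_cases hj : j = i0
          · rw [if_pos hj, hj]
            rcases eq_or_lt_of_le (hP i0) with h0 | h0
            · rw [gP, if_pos (hP i0), ← h0, abs_zero]
              exact gB_nonneg ψ k _
            · rw [gP, gB, if_pos (hP i0), if_pos ⟨h0, hi0⟩]
          · rw [if_neg hj]
        have habs : |dbc (phi0 R) ψ x| = 2^R * ((∏ i, gP ψ (x i)) + 0)/2 := by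
          rw [dbc_abs ψ hR0 x, prod_gN_zero' ψ ⟨0, hR0⟩ (hP _)]
        have hEn' : 0 ≤ u⁻¹^R * EnF k t ψ x := mul_nonneg (by positivity) (hEn0 x)
        have h2 : 2 * |dbc (phi0 R) ψ x| ≤ 2^R * (EpF k ψ x + u⁻¹^R * EnF k t ψ x) := by
          rw [habs]
          have h3 := mul_le_mul_of_nonneg_left hprod (le_of_lt h2R)
          have h4 := mul_le_mul_of_nonneg_left hEn' (le_of_lt h2R)
          have h5 : 2 * ((2:ℝ)^R * ((∏ i, gP ψ (x i)) + 0)/2) = 2^R * ∏ i, gP ψ (x i) := by ring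
          have h6 : (2:ℝ)^R * (EpF k ψ x + u⁻¹^R * EnF k t ψ x)
              = 2^R * EpF k ψ x + 2^R * (u⁻¹^R * EnF k t ψ x) := by ring
          rw [h5, h6]
          linarith
        linarith [hFlb x]
    · by_cases hQ : ∀ i, ψ (x i) < 0
      · have hcard : (Finset.univ.filter (fun i => THR N k (x i) = true)).card
            = (Finset.univ.filter (fun i => k ≤ wt (x i))).card := by
          congr 1
          apply Finset.filter_congr
          intro i _
          simp [THR]
        set m := (Finset.univ.filter (fun i => k ≤ wt (x i))).card with hm_def
        by_cases hG : γ * R ≤ (m:ℝ)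
        · -- good negative block
          have hdom : inDom γ N R k x := Or.inr (by rw [hcard]; exact hG)
          have hm1 : 0 < m := by
            by_contra hmm
            push_neg at hmm
            have hm0 : (m:ℝ) = 0 := by
              have : m = 0 := by omega
              simp [this]
            have hRpos : (0:ℝ) < R := by exact_mod_cast hR0
            linarith [mul_pos hγ0 hRpos, hG]
          obtain ⟨i0, hi0mem⟩ := Finset.card_pos.mp hm1
          have hi0 : k ≤ wt (x i0) := (Finset.mem_filter.mp hi0mem).2
          have hf : fval N R k x = -1 := by
            rw [fval, if_neg]
            intro hall
            have := (THR_false_iff k (x i0)).mp (hall i0)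
            omega
          have hd : dbc (phi0 R) ψ x = -(2^R * (∏ i, gN ψ (x i)) / 2) :=
            dbc_neg_case ψ hR0 hQ
          have hd0 : dbc (phi0 R) ψ x ≤ 0 := by
            rw [hd, neg_nonpos]
            have := prodN_nonneg ψ x
            positivity
          have hFeq : FF γ N R k ψ x = |dbc (phi0 R) ψ x| := by
            rw [FF, if_pos hdom, if_neg (not_not.mpr hdom), sub_zero, hf,
              abs_of_nonpos hd0]
            ring
          linarith
        · -- bad negative block
          push_neg at hG
          have hw_eq : EnF k t ψ x = (∏ i, gN ψ (x i)) * t ^ m := by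
            rw [EnF]
            have hwi : ∀ i, wN k t ψ (x i) = gN ψ (x i) * (if k ≤ wt (x i) then t else 1) := by
              intro i
              rw [wN, aN, bN, gN, if_pos (hQ i)]
              by_cases h2 : k ≤ wt (x i)
              · rw [if_neg (fun hc => absurd hc.2 (by omega)), if_pos ⟨hQ i, h2⟩, if_pos h2]
                ring
              · rw [if_pos ⟨hQ i, by omega⟩, if_neg (fun hc => h2 hc.2), if_neg h2]
                ring
            rw [Finset.prod_congr rfl (fun i _ => hwi i), Finset.prod_mul_distrib]
            congr 1
            rw [Finset.prod_ite, Finset.prod_const, Finset.prod_const, one_pow, mul_one, hm_def]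
          have htm : u ^ R ≤ t ^ m := by
            have e1 : u ^ R = t ^ (γ * (R:ℝ)) := by
              rw [hu_def, ← Real.rpow_natCast (t ^ γ) R, ← Real.rpow_mul ht0.le]
            have e2 : t ^ m = t ^ ((m:ℕ):ℝ) := (Real.rpow_natCast t m).symm
            rw [e1, e2]
            exact Real.rpow_le_rpow_of_exponent_ge ht0 ht1.le (le_of_lt hG)
          have hprod : ∏ i, gN ψ (x i) ≤ u⁻¹^R * EnF k t ψ x := by
            rw [hw_eq, inv_pow]
            have hg0 := prodN_nonneg ψ x
            have hone : (1:ℝ) ≤ (u^R)⁻¹ * t^m := by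
              rw [← div_eq_inv_mul, le_div_iff₀ (pow_pos hu0 R), one_mul]
              exact htm
            calc ∏ i, gN ψ (x i) = (∏ i, gN ψ (x i)) * 1 := (mul_one _).symm
            _ ≤ (∏ i, gN ψ (x i)) * ((u^R)⁻¹ * t^m) := mul_le_mul_of_nonneg_left hone hg0
            _ = (u^R)⁻¹ * ((∏ i, gN ψ (x i)) * t^m) := by ring
          have habs : |dbc (phi0 R) ψ x| = 2^R * (0 + ∏ i, gN ψ (x i))/2 := by
            push_neg at hP
            obtain ⟨i1, hi1⟩ := hP
            rw [dbc_abs ψ hR0 x, prod_gP_zero' ψ i1 hi1]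
          have h2 : 2 * |dbc (phi0 R) ψ x| ≤ 2^R * (EpF k ψ x + u⁻¹^R * EnF k t ψ x) := by
            rw [habs]
            have h3 := mul_le_mul_of_nonneg_left hprod (le_of_lt h2R)
            have h4 : 0 ≤ 2^R * EpF k ψ x := mul_nonneg h2R.le (hEp0 x)
            have h5 : 2 * ((2:ℝ)^R * (0 + ∏ i, gN ψ (x i))/2) = 2^R * ∏ i, gN ψ (x i) := by ring
            have h6 : (2:ℝ)^R * (EpF k ψ x + u⁻¹^R * EnF k t ψ x)
                = 2^R * EpF k ψ x + 2^R * (u⁻¹^R * EnF k t ψ x) := by ring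
            rw [h5, h6]
            linarith
          linarith [hFlb x]
      · -- mixed block
        have hd : dbc (phi0 R) ψ x = 0 := dbc_mixed ψ hP hQ
        have hlb := hFlb x
        rw [hd, abs_zero] at hlb ⊢
        linarith
  -- summing up
  have hsum1 : ∑ x : Fin R → Fin N → Bool, |dbc (phi0 R) ψ x| = 1 := by
    rw [Finset.sum_congr rfl fun x _ => dbc_abs ψ hR0 x]
    rw [← Finset.sum_div, ← Finset.mul_sum, Finset.sum_add_distrib,
      ← Fintype.sum_pow, ← Fintype.sum_pow, hSgP, hSgN]
    have hx : (2:ℝ)^R * ((1:ℝ)/2)^R = 1 := by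
      rw [← mul_pow]; norm_num
    rw [show (2:ℝ)^R * (((1:ℝ)/2)^R + ((1:ℝ)/2)^R) / 2 = 2^R * ((1:ℝ)/2)^R from by ring, hx]
  have hsumEp : ∑ x : Fin R → Fin N → Bool, EpF k ψ x
      = R * ((∑ y, gB k ψ y) * (∑ y, gP ψ y)^(R-1)) := by
    simp only [EpF]
    rw [Finset.sum_comm]
    have hfix : ∀ i : Fin R, ∑ x : Fin R → Fin N → Bool,
        ∏ j, (if j = i then gB k ψ (x j) else gP ψ (x j))
        = (∑ y, gB k ψ y) * (∑ y, gP ψ y)^(R-1) := by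
      intro i
      have e1 : ∑ x : Fin R → Fin N → Bool, ∏ j, (if j = i then gB k ψ (x j) else gP ψ (x j))
          = ∏ j, ∑ y, (if j = i then gB k ψ y else gP ψ y) :=
        (Fintype.prod_sum (fun j y => if j = i then gB k ψ y else gP ψ y)).symm
      rw [e1, ← Finset.mul_prod_erase Finset.univ _ (Finset.mem_univ i)]
      have f1 : ∑ y, (if i = i then gB k ψ y else gP ψ y) = ∑ y, gB k ψ y :=
        Finset.sum_congr rfl fun y _ => if_pos rfl
      have f2 : ∏ j ∈ Finset.univ.erase i, (∑ y, if j = i then gB k ψ y else gP ψ y)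
          = (∑ y, gP ψ y)^(R-1) := by
        rw [Finset.prod_congr rfl (fun j hj =>
          Finset.sum_congr rfl fun y _ => if_neg (Finset.mem_erase.mp hj).1)]
        rw [Finset.prod_const, Finset.card_erase_of_mem (Finset.mem_univ i),
          Finset.card_univ, Fintype.card_fin]
      rw [f1, f2]
    rw [Finset.sum_congr rfl fun i _ => hfix i, Finset.sum_const, Finset.card_univ,
      Fintype.card_fin, nsmul_eq_mul]
  have hsumEn : ∑ x : Fin R → Fin N → Bool, EnF k t ψ x = (∑ y, wN k t ψ y)^R := by
    simp only [EnF]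
    exact (Fintype.sum_pow _ R).symm
  have hmain : 1 - 2^R * ((∑ x : Fin R → Fin N → Bool, EpF k ψ x)
      + u⁻¹^R * ∑ x : Fin R → Fin N → Bool, EnF k t ψ x)
      ≤ ∑ x : Fin R → Fin N → Bool, FF γ N R k ψ x := by
    have hs := Finset.sum_le_sum (fun x (_ : x ∈ (Finset.univ : Finset (Fin R → Fin N → Bool))) => hkey x)
    rw [Finset.sum_sub_distrib, hsum1, ← Finset.mul_sum, Finset.sum_add_distrib,
      ← Finset.mul_sum] at hs
    exact hs
  have hEpB : (2:ℝ)^R * (∑ x : Fin R → Fin N → Bool, EpF k ψ x) ≤ 1/24 := by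
    rw [hsumEp, hSgP]
    have hpow2 : (2:ℝ)^R * ((1:ℝ)/2)^(R-1) = 2 := by
      obtain ⟨r, hr⟩ : ∃ r, R = r + 1 := ⟨R - 1, by omega⟩
      rw [hr, Nat.add_sub_cancel, pow_succ, mul_comm ((2:ℝ)^r) 2, mul_assoc, ← mul_pow]
      norm_num
    have hRR : (0:ℝ) ≤ (R:ℝ) := Nat.cast_nonneg R
    calc (2:ℝ)^R * ((R:ℝ) * ((∑ y, gB k ψ y) * ((1:ℝ)/2)^(R-1)))
        = (R:ℝ) * (∑ y, gB k ψ y) * ((2:ℝ)^R * ((1:ℝ)/2)^(R-1)) := by ring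
    _ = 2 * (R:ℝ) * ∑ y, gB k ψ y := by rw [hpow2]; ring
    _ ≤ 2 * (R:ℝ) * (1/(48*N)) := by
        apply mul_le_mul_of_nonneg_left hSgB (by positivity)
    _ ≤ 1/24 := by
        rw [show 2 * (R:ℝ) * (1/(48*(N:ℝ))) = (R:ℝ)/(24*(N:ℝ)) from by field_simp; ring]
        rw [div_le_iff₀ (by positivity)]
        linarith
  have hEnB : (2:ℝ)^R * (u⁻¹^R * ∑ x : Fin R → Fin N → Bool, EnF k t ψ x) ≤ 1/20 := by
    rw [hsumEn]
    rw [show (2:ℝ)^R * (u⁻¹^R * (∑ y, wN k t ψ y)^R) = (2 * u⁻¹ * ∑ y, wN k t ψ y)^R from by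
      rw [mul_pow, mul_pow]; ring]
    refine le_trans (pow_le_pow_left₀ (by positivity) ?_ R) hθR
    calc 2 * u⁻¹ * ∑ y, wN k t ψ y = (2 * ∑ y, wN k t ψ y) * u⁻¹ := by ring
    _ ≤ (1 - c + t*c) * u⁻¹ := mul_le_mul_of_nonneg_right h2Sw (inv_nonneg.mpr hu0.le)
    _ = (1 - c + t*c)/u := (div_eq_mul_inv _ _).symm
    _ = θ := hθ_def.symm
  have hdist : (2:ℝ)^R * ((∑ x : Fin R → Fin N → Bool, EpF k ψ x)
      + u⁻¹^R * ∑ x : Fin R → Fin N → Bool, EnF k t ψ x)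
      = 2^R * (∑ x : Fin R → Fin N → Bool, EpF k ψ x)
        + 2^R * (u⁻¹^R * ∑ x : Fin R → Fin N → Bool, EnF k t ψ x) := by ring
  rw [hdist] at hmain
  linarith
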